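/- (Energy estimate for the adjoint system with small potential.) Let L > 0. There exists a constant C = C(L) > 0 such that for every T > 0, every ξ ∈ C^∞([0,T]×[0,L]) with ‖ξ‖_{L²(0,T;H¹(0,L))} ≤ 1/√C, and every v ∈ C^∞([0,T]×[0,L]) satisfying −v_t − ξ v_x − v_xxx = 0 on (0,T)×(0,L) and v(t,0) = v(t,L) = v_x(t,0) = 0 for all t ∈ [0,T], one has: max_{t∈[0,T]} ∫₀^L v(t,x)² dx + ∫₀^T∫₀^L v_x² dx dt ≤ C ∫₀^L v(T,x)² dx. -/

import Mathlib

/-- Partial derivative in the space variable (second argument). -/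
noncomputable def pdx (f : ℝ → ℝ → ℝ) : ℝ → ℝ → ℝ := fun t x => deriv (f t) x

/-- Partial derivative in the time variable (first argument). -/
noncomputable def pdt (f : ℝ → ℝ → ℝ) : ℝ → ℝ → ℝ := fun t x => deriv (fun s => f s x) t

section Aux
open MeasureTheory Set Function intervalIntegral

lemma contDiff_curry_right {f : ℝ → ℝ → ℝ} (hf : ContDiff ℝ (⊤:ℕ∞) (uncurry f)) (t : ℝ) :
    ContDiff ℝ (⊤:ℕ∞) (f t) :=
  hf.comp (contDiff_const.prodMk contDiff_id)

lemma hasDerivAt_pdx {f : ℝ → ℝ → ℝ} (hf : ContDiff ℝ (⊤:ℕ∞) (uncurry f)) (t x : ℝ) :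
    HasDerivAt (f t) (pdx f t x) x :=
  (((contDiff_curry_right hf t).differentiable (by simp)) x).hasDerivAt

lemma hasDerivAt_pdt {f : ℝ → ℝ → ℝ} (hf : ContDiff ℝ (⊤:ℕ∞) (uncurry f)) (t x : ℝ) :
    HasDerivAt (fun s => f s x) (pdt f t x) t :=
  (((hf.comp (contDiff_id.prodMk contDiff_const)).differentiable (by simp)) t).hasDerivAt

lemma contDiff_pdx {f : ℝ → ℝ → ℝ} (hf : ContDiff ℝ (⊤:ℕ∞) (uncurry f)) :
    ContDiff ℝ (⊤:ℕ∞) (uncurry (pdx f)) := by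
  have h1 : ContDiff ℝ (⊤:ℕ∞) (fun p : ℝ × ℝ => fderiv ℝ (uncurry f) p ((0:ℝ), (1:ℝ))) :=
    (hf.fderiv_right (by exact_mod_cast le_top)).clm_apply contDiff_const
  have h2 : uncurry (pdx f) = fun p : ℝ × ℝ => fderiv ℝ (uncurry f) p ((0:ℝ),(1:ℝ)) := by
    funext p
    obtain ⟨t, x⟩ := p
    have hline : HasDerivAt (fun y : ℝ => ((t, y) : ℝ × ℝ)) ((0:ℝ),(1:ℝ)) x :=
      (hasDerivAt_const x t).prodMk (hasDerivAt_id x)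
    have hF : HasFDerivAt (uncurry f) (fderiv ℝ (uncurry f) (t, x)) (t, x) :=
      (hf.differentiable (by simp) (t, x)).hasFDerivAt
    have : HasDerivAt (f t) (fderiv ℝ (uncurry f) (t, x) ((0:ℝ),(1:ℝ))) x := by
      have := hF.comp_hasDerivAt x hline
      exact this
    simp [pdx, uncurry, this.deriv]
  rw [h2]; exact h1

lemma contDiff_pdt {f : ℝ → ℝ → ℝ} (hf : ContDiff ℝ (⊤:ℕ∞) (uncurry f)) :
    ContDiff ℝ (⊤:ℕ∞) (uncurry (pdt f)) := by
  have h1 : ContDiff ℝ (⊤:ℕ∞) (fun p : ℝ × ℝ => fderiv ℝ (uncurry f) p ((1:ℝ), (0:ℝ))) :=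
    (hf.fderiv_right (by exact_mod_cast le_top)).clm_apply contDiff_const
  have h2 : uncurry (pdt f) = fun p : ℝ × ℝ => fderiv ℝ (uncurry f) p ((1:ℝ),(0:ℝ)) := by
    funext p
    obtain ⟨t, x⟩ := p
    have hline : HasDerivAt (fun s : ℝ => ((s, x) : ℝ × ℝ)) ((1:ℝ),(0:ℝ)) t :=
      (hasDerivAt_id t).prodMk (hasDerivAt_const t x)
    have hF : HasFDerivAt (uncurry f) (fderiv ℝ (uncurry f) (t, x)) (t, x) :=
      (hf.differentiable (by simp) (t, x)).hasFDerivAt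
    have : HasDerivAt (fun s => f s x) (fderiv ℝ (uncurry f) (t, x) ((1:ℝ),(0:ℝ))) t := by
      have := hF.comp_hasDerivAt t hline
      exact this
    simp [pdt, uncurry, this.deriv]
  rw [h2]; exact h1

/-- Fubini for a continuous function on a rectangle. -/
lemma swap_rect {f : ℝ → ℝ → ℝ} (hf : Continuous (uncurry f))
    {a b c d : ℝ} (hab : a ≤ b) (hcd : c ≤ d) :
    (∫ τ in a..b, ∫ x in c..d, f τ x) = ∫ x in c..d, ∫ τ in a..b, f τ x := by
  rw [intervalIntegral.integral_of_le hab, intervalIntegral.integral_of_le hcd]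
  simp_rw [intervalIntegral.integral_of_le hcd, intervalIntegral.integral_of_le hab]
  apply MeasureTheory.integral_integral_swap
  rw [Measure.prod_restrict]
  exact (hf.continuousOn.integrableOn_compact (isCompact_Icc.prod isCompact_Icc)).mono_set
    (Set.prod_mono Set.Ioc_subset_Icc_self Set.Ioc_subset_Icc_self)

/-- Cauchy–Schwarz for interval integrals of continuous functions. -/
lemma cs_interval {a b : ℝ} (hab : a ≤ b) {f g : ℝ → ℝ}
    (hf : Continuous f) (hg : Continuous g) :
    (∫ x in a..b, f x * g x) ≤
      Real.sqrt (∫ x in a..b, (f x)^2) * Real.sqrt (∫ x in a..b, (g x)^2) := by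
  set A := ∫ x in a..b, (f x)^2 with hA
  set C := ∫ x in a..b, (g x)^2 with hC
  set B := ∫ x in a..b, f x * g x with hB
  have hA0 : 0 ≤ A := intervalIntegral.integral_nonneg hab (fun x _ => sq_nonneg _)
  have hC0 : 0 ≤ C := intervalIntegral.integral_nonneg hab (fun x _ => sq_nonneg _)
  have hP : ∀ lam : ℝ, 0 ≤ A - 2*lam*B + lam^2*C := by
    intro lam
    have h1 : (0:ℝ) ≤ ∫ x in a..b, (f x - lam * g x)^2 :=
      intervalIntegral.integral_nonneg hab (fun x _ => sq_nonneg _)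
    have i1 : IntervalIntegrable (fun x => (f x)^2) volume a b := (hf.pow 2).intervalIntegrable a b
    have i2 : IntervalIntegrable (fun x => (2*lam) * (f x * g x)) volume a b :=
      (continuous_const.mul (hf.mul hg)).intervalIntegrable a b
    have i3 : IntervalIntegrable (fun x => lam^2 * (g x)^2) volume a b :=
      (continuous_const.mul (hg.pow 2)).intervalIntegrable a b
    have h2 : (∫ x in a..b, (f x - lam * g x)^2) = A - 2*lam*B + lam^2*C := by
      have e : ∀ x, (f x - lam * g x)^2
          = (f x)^2 - (2*lam) * (f x * g x) + lam^2 * (g x)^2 := by intro x; ring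
      simp_rw [e]
      rw [intervalIntegral.integral_add (i1.sub i2) i3, intervalIntegral.integral_sub i1 i2,
        intervalIntegral.integral_const_mul, intervalIntegral.integral_const_mul, hA, hB, hC]
    linarith [h2 ▸ h1]
  rcases le_or_gt B 0 with hB0 | hB0
  · exact hB0.trans (mul_nonneg (Real.sqrt_nonneg _) (Real.sqrt_nonneg _))
  · have hBsq : B^2 ≤ A * C := by
      rcases eq_or_lt_of_le hC0 with hCe | hCp
      · exfalso
        have h := hP ((A + 1) / (2 * B))
        rw [← hCe] at h
        have hBne : B ≠ 0 := ne_of_gt hB0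
        have key : 2 * ((A+1)/(2*B)) * B = A + 1 := by field_simp
        nlinarith [h, key]
      · have := hP (B / C)
        have h4 : A - 2*(B/C)*B + (B/C)^2 * C = A - B^2/C := by field_simp; ring
        rw [h4] at this
        have : B^2 / C ≤ A := by linarith
        calc B^2 = (B^2/C) * C := by field_simp
          _ ≤ A * C := by nlinarith
    calc B = Real.sqrt (B^2) := by rw [Real.sqrt_sq hB0.le]
      _ ≤ Real.sqrt (A * C) := Real.sqrt_le_sqrt hBsq
      _ = Real.sqrt A * Real.sqrt C := Real.sqrt_mul hA0 _

/-- 1D Sobolev: sup bound by H¹ norm on [0,L]. -/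
lemma sobolev_sup {L : ℝ} (hL : 0 < L) {g g' : ℝ → ℝ} (hg : Continuous g) (hg' : Continuous g')
    (hd : ∀ x, HasDerivAt g (g' x) x) :
    ∀ x ∈ Icc (0:ℝ) L, (g x)^2 ≤ (1 + 1/L) * ∫ y in (0:ℝ)..L, ((g y)^2 + (g' y)^2) := by
  obtain ⟨y₀, hy₀, hmin⟩ := isCompact_Icc.exists_isMinOn (Set.nonempty_Icc.2 hL.le)
    ((hg.pow 2).continuousOn : ContinuousOn (fun y => (g y)^2) (Icc 0 L))
  have hIg : IntervalIntegrable (fun y => (g y)^2) volume 0 L := (hg.pow 2).intervalIntegrable _ _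
  have hIg' : IntervalIntegrable (fun y => (g' y)^2) volume 0 L := (hg'.pow 2).intervalIntegrable _ _
  have hIgg : IntervalIntegrable (fun y => (g y)^2 + (g' y)^2) volume 0 L := hIg.add hIg'
  have habs : Continuous (fun y => |2 * g y * g' y|) := (((continuous_const.mul hg).mul hg')).abs
  have h1 : L * (g y₀)^2 ≤ ∫ y in (0:ℝ)..L, (g y)^2 := by
    have h := intervalIntegral.integral_mono_on hL.le (intervalIntegrable_const) hIg
      (fun z hz => hmin hz)
    simpa using h
  intro x hx
  have hderiv : ∀ y, HasDerivAt (fun y => (g y)^2) (2 * g y * g' y) y := by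
    intro y
    have := (hd y).fun_pow 2
    simpa [pow_one] using this
  have ftc : (g x)^2 = (g y₀)^2 + ∫ y in y₀..x, 2 * g y * g' y := by
    have h := intervalIntegral.integral_eq_sub_of_hasDerivAt
      (a := y₀) (b := x) (f := fun y => (g y)^2) (f' := fun y => 2 * g y * g' y)
      (fun y _ => hderiv y) (((continuous_const.mul hg).mul hg').intervalIntegrable y₀ x)
    have h' : (∫ y in y₀..x, 2 * g y * g' y) = (g x)^2 - (g y₀)^2 := by simpa using h
    linarith
  have hsub : |∫ y in y₀..x, 2 * g y * g' y| ≤ ∫ y in (0:ℝ)..L, |2 * g y * g' y| := by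
    have key : ∀ a b : ℝ, a ∈ Icc (0:ℝ) L → b ∈ Icc (0:ℝ) L → a ≤ b →
        |∫ y in a..b, 2 * g y * g' y| ≤ ∫ y in (0:ℝ)..L, |2 * g y * g' y| := by
      intro a b ha hb hab
      refine (intervalIntegral.abs_integral_le_integral_abs hab).trans ?_
      exact intervalIntegral.integral_mono_interval ha.1 hab hb.2
        (Filter.Eventually.of_forall (fun y => abs_nonneg _))
        (habs.intervalIntegrable _ _)
    rcases le_total y₀ x with h | h
    · exact key y₀ x hy₀ hx h
    · rw [intervalIntegral.integral_symm, abs_neg]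
      exact key x y₀ hx hy₀ h
  have h2 : (∫ y in (0:ℝ)..L, |2 * g y * g' y|) ≤ ∫ y in (0:ℝ)..L, ((g y)^2 + (g' y)^2) := by
    refine intervalIntegral.integral_mono_on hL.le (habs.intervalIntegrable _ _) hIgg ?_
    intro y _
    have : |2 * g y * g' y| = 2 * |g y| * |g' y| := by
      rw [abs_mul, abs_mul]; simp [abs_of_nonneg]
    nlinarith [sq_nonneg (|g y| - |g' y|), sq_abs (g y), sq_abs (g' y)]
  have h3 : (∫ y in (0:ℝ)..L, (g y)^2) ≤ ∫ y in (0:ℝ)..L, ((g y)^2 + (g' y)^2) :=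
    intervalIntegral.integral_mono_on hL.le hIg hIgg (fun y _ => by nlinarith [sq_nonneg (g' y)])
  have hy0sq : (g y₀)^2 ≤ (1/L) * ∫ y in (0:ℝ)..L, ((g y)^2 + (g' y)^2) := by
    have h1' : (g y₀)^2 ≤ (∫ y in (0:ℝ)..L, (g y)^2) / L := by
      rw [le_div_iff₀ hL]; linarith [h1]
    calc (g y₀)^2 ≤ (∫ y in (0:ℝ)..L, (g y)^2) / L := h1' 
      _ ≤ (∫ y in (0:ℝ)..L, ((g y)^2 + (g' y)^2)) / L := by
          gcongr
      _ = (1/L) * _ := by ring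
  have := abs_le.1 (le_refl |∫ y in y₀..x, 2 * g y * g' y|)
  calc (g x)^2 = (g y₀)^2 + ∫ y in y₀..x, 2 * g y * g' y := ftc
    _ ≤ (g y₀)^2 + |∫ y in y₀..x, 2 * g y * g' y| := by
        linarith [le_abs_self (∫ y in y₀..x, 2 * g y * g' y)]
    _ ≤ (1/L) * (∫ y in (0:ℝ)..L, ((g y)^2 + (g' y)^2))
        + ∫ y in (0:ℝ)..L, ((g y)^2 + (g' y)^2) := by
        linarith [hsub.trans h2]
    _ = (1 + 1/L) * ∫ y in (0:ℝ)..L, ((g y)^2 + (g' y)^2) := by ring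

lemma ftc_x1 {L : ℝ} {v : ℝ → ℝ → ℝ} (hv : ContDiff ℝ (⊤:ℕ∞) (uncurry v))
    {τ : ℝ} (h0 : v τ 0 = 0) (hLb : v τ L = 0) (hx0 : pdx v τ 0 = 0) :
    (∫ x in (0:ℝ)..L, v τ x * pdx (pdx (pdx v)) τ x) = -(pdx v τ L)^2/2 := by
  have hvx := contDiff_pdx hv
  have hvxx := contDiff_pdx hvx
  have hW : ∀ x : ℝ, HasDerivAt (fun y => v τ y * pdx (pdx v) τ y - (pdx v τ y)^2/2)
      (v τ x * pdx (pdx (pdx v)) τ x) x := by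
    intro x
    have h1 := hasDerivAt_pdx hv τ x
    have h2 := hasDerivAt_pdx hvx τ x
    have h3 := hasDerivAt_pdx hvxx τ x
    have h := (h1.fun_mul h3).fun_sub ((h2.fun_pow 2).div_const 2)
    refine h.congr_deriv ?_
    ring
  have hint : Continuous (fun x => v τ x * pdx (pdx (pdx v)) τ x) :=
    (contDiff_curry_right hv τ).continuous.mul
      (contDiff_curry_right (contDiff_pdx hvxx) τ).continuous
  rw [intervalIntegral.integral_eq_sub_of_hasDerivAt (fun x _ => hW x)
    (hint.intervalIntegrable _ _)]
  rw [h0, hLb, hx0]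
  ring

lemma ftc_x2 {L : ℝ} {v : ℝ → ℝ → ℝ} (hv : ContDiff ℝ (⊤:ℕ∞) (uncurry v))
    {τ : ℝ} (h0 : v τ 0 = 0) (hLb : v τ L = 0) :
    (∫ x in (0:ℝ)..L, (x * (v τ x * pdx (pdx (pdx v)) τ x) - (3/2)*(pdx v τ x)^2))
      = -(L/2)*(pdx v τ L)^2 := by
  have hvx := contDiff_pdx hv
  have hvxx := contDiff_pdx hvx
  have hW : ∀ x : ℝ, HasDerivAt
      (fun y => y * (v τ y * pdx (pdx v) τ y) - y * ((pdx v τ y)^2/2) - v τ y * pdx v τ y)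
      (x * (v τ x * pdx (pdx (pdx v)) τ x) - (3/2)*(pdx v τ x)^2) x := by
    intro x
    have h1 := hasDerivAt_pdx hv τ x
    have h2 := hasDerivAt_pdx hvx τ x
    have h3 := hasDerivAt_pdx hvxx τ x
    have h := (((hasDerivAt_id x).fun_mul (h1.fun_mul h3)).fun_sub
      ((hasDerivAt_id x).fun_mul ((h2.fun_pow 2).div_const 2))).fun_sub (h1.fun_mul h2)
    refine h.congr_deriv ?_
    simp only [id_eq]
    ring
  have hint : Continuous (fun x => x * (v τ x * pdx (pdx (pdx v)) τ x) - (3/2)*(pdx v τ x)^2) := by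
    apply Continuous.sub
    · exact continuous_id.mul ((contDiff_curry_right hv τ).continuous.mul
        (contDiff_curry_right (contDiff_pdx hvxx) τ).continuous)
    · exact continuous_const.mul ((contDiff_curry_right hvx τ).continuous.pow 2)
  rw [intervalIntegral.integral_eq_sub_of_hasDerivAt (fun x _ => hW x)
    (hint.intervalIntegrable _ _)]
  rw [h0, hLb]
  ring

lemma ftc_t {T L : ℝ} (hL : 0 < L) {v : ℝ → ℝ → ℝ}
    (hv : ContDiff ℝ (⊤:ℕ∞) (uncurry v)) (w : ℝ → ℝ) (hw : Continuous w)
    {s : ℝ} (hs : s ≤ T) :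
    (∫ x in (0:ℝ)..L, w x * (v T x)^2) - (∫ x in (0:ℝ)..L, w x * (v s x)^2)
      = ∫ τ in s..T, ∫ x in (0:ℝ)..L, 2 * w x * (v τ x * pdt v τ x) := by
  have hvt := contDiff_pdt hv
  have cvt : Continuous (fun p : ℝ × ℝ => pdt v p.1 p.2) := hvt.continuous
  have cv : Continuous (fun p : ℝ × ℝ => v p.1 p.2) := hv.continuous
  have hcont : Continuous (uncurry (fun x τ => 2 * w x * (v τ x * pdt v τ x))) := by
    apply Continuous.mul
    · exact continuous_const.mul (hw.comp continuous_fst)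
    · exact (cv.comp (continuous_snd.prodMk continuous_fst)).mul
        (cvt.comp (continuous_snd.prodMk continuous_fst))
  have i1 : IntervalIntegrable (fun x => w x * (v T x)^2) volume 0 L :=
    (hw.mul ((contDiff_curry_right hv T).continuous.pow 2)).intervalIntegrable _ _
  have i2 : IntervalIntegrable (fun x => w x * (v s x)^2) volume 0 L :=
    (hw.mul ((contDiff_curry_right hv s).continuous.pow 2)).intervalIntegrable _ _
  have step1 : ∀ x : ℝ, w x * (v T x)^2 - w x * (v s x)^2
      = ∫ τ in s..T, 2 * w x * (v τ x * pdt v τ x) := by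
    intro x
    have hd : ∀ τ : ℝ, HasDerivAt (fun σ => w x * (v σ x)^2)
        (2 * w x * (v τ x * pdt v τ x)) τ := by
      intro τ
      have h := ((hasDerivAt_pdt hv τ x).fun_pow 2).const_mul (w x)
      refine h.congr_deriv ?_
      ring
    have hci : Continuous (fun τ => 2 * w x * (v τ x * pdt v τ x)) :=
      continuous_const.mul ((cv.comp (continuous_id.prodMk continuous_const)).mul
        (cvt.comp (continuous_id.prodMk continuous_const)))
    have h := intervalIntegral.integral_eq_sub_of_hasDerivAt (a := s) (b := T)
      (fun τ _ => hd τ) (hci.intervalIntegrable s T)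
    simpa using h.symm
  calc (∫ x in (0:ℝ)..L, w x * (v T x)^2) - (∫ x in (0:ℝ)..L, w x * (v s x)^2)
      = ∫ x in (0:ℝ)..L, (w x * (v T x)^2 - w x * (v s x)^2) :=
        (intervalIntegral.integral_sub i1 i2).symm
    _ = ∫ x in (0:ℝ)..L, ∫ τ in s..T, 2 * w x * (v τ x * pdt v τ x) :=
        intervalIntegral.integral_congr (fun x _ => step1 x)
    _ = ∫ τ in s..T, ∫ x in (0:ℝ)..L, 2 * w x * (v τ x * pdt v τ x) :=
        swap_rect hcont hL.le hs

lemma pde_closed {T L : ℝ} (hT : 0 < T) (hL : 0 < L) {ξ v : ℝ → ℝ → ℝ}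
    (hξ : ContDiff ℝ (⊤:ℕ∞) (uncurry ξ)) (hv : ContDiff ℝ (⊤:ℕ∞) (uncurry v))
    (hPDE : ∀ t ∈ Set.Ioo (0:ℝ) T, ∀ x ∈ Set.Ioo (0:ℝ) L,
      -pdt v t x - ξ t x * pdx v t x - pdx (pdx (pdx v)) t x = 0) :
    ∀ τ ∈ Icc (0:ℝ) T, ∀ x ∈ Icc (0:ℝ) L,
      pdt v τ x = -(ξ τ x * pdx v τ x) - pdx (pdx (pdx v)) τ x := by
  have hcont : Continuous (fun p : ℝ×ℝ =>
      pdt v p.1 p.2 + ξ p.1 p.2 * pdx v p.1 p.2 + pdx (pdx (pdx v)) p.1 p.2) := by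
    refine Continuous.add (Continuous.add ?_ ?_) ?_
    · exact (contDiff_pdt hv).continuous
    · exact hξ.continuous.mul (contDiff_pdx hv).continuous
    · exact (contDiff_pdx (contDiff_pdx (contDiff_pdx hv))).continuous
  have hclosed : IsClosed {p : ℝ×ℝ |
      pdt v p.1 p.2 + ξ p.1 p.2 * pdx v p.1 p.2 + pdx (pdx (pdx v)) p.1 p.2 = 0} :=
    isClosed_eq hcont continuous_const
  have hsub : Ioo (0:ℝ) T ×ˢ Ioo (0:ℝ) L ⊆ {p : ℝ×ℝ |
      pdt v p.1 p.2 + ξ p.1 p.2 * pdx v p.1 p.2 + pdx (pdx (pdx v)) p.1 p.2 = 0} := by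
    rintro ⟨a, b⟩ ⟨ha, hb⟩
    have := hPDE a ha b hb
    simp only [Set.mem_setOf_eq]
    linarith
  intro τ hτ x hx
  have hmem : (τ, x) ∈ closure (Ioo (0:ℝ) T ×ˢ Ioo (0:ℝ) L) := by
    rw [closure_prod_eq, closure_Ioo hT.ne, closure_Ioo hL.ne]
    exact ⟨hτ, hx⟩
  have := closure_minimal hsub hclosed hmem
  simp only [Set.mem_setOf_eq] at this
  linarith

lemma E_id {T L : ℝ} (hT : 0 < T) (hL : 0 < L) {ξ v : ℝ → ℝ → ℝ}
    (hξ : ContDiff ℝ (⊤:ℕ∞) (uncurry ξ)) (hv : ContDiff ℝ (⊤:ℕ∞) (uncurry v))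
    (hPDE : ∀ t ∈ Set.Ioo (0:ℝ) T, ∀ x ∈ Set.Ioo (0:ℝ) L,
      -pdt v t x - ξ t x * pdx v t x - pdx (pdx (pdx v)) t x = 0)
    (hbc : ∀ t ∈ Set.Icc (0:ℝ) T, v t 0 = 0 ∧ v t L = 0 ∧ pdx v t 0 = 0)
    {s : ℝ} (hs : s ∈ Icc (0:ℝ) T) :
    (∫ x in (0:ℝ)..L, (v T x)^2) - (∫ x in (0:ℝ)..L, (v s x)^2)
      = -2*(∫ τ in s..T, ∫ x in (0:ℝ)..L, ξ τ x * (v τ x * pdx v τ x))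
        + ∫ τ in s..T, (pdx v τ L)^2 := by
  have hPDE' := pde_closed hT hL hξ hv hPDE
  have h3 := ftc_t (T := T) hL hv (fun _ => (1:ℝ)) continuous_const hs.2
  simp only [mul_one, one_mul] at h3
  have cξ : Continuous (fun p : ℝ×ℝ => ξ p.1 p.2) := hξ.continuous
  have cv : Continuous (fun p : ℝ×ℝ => v p.1 p.2) := hv.continuous
  have cvx : Continuous (fun p : ℝ×ℝ => pdx v p.1 p.2) := (contDiff_pdx hv).continuous
  have inner : ∀ τ ∈ Icc (0:ℝ) T,
      (∫ x in (0:ℝ)..L, 2 * (v τ x * pdt v τ x))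
      = -2*(∫ x in (0:ℝ)..L, ξ τ x * (v τ x * pdx v τ x)) + (pdx v τ L)^2 := by
    intro τ hτ
    obtain ⟨b0, bL, bx0⟩ := hbc τ hτ
    have hcongr : EqOn (fun x => 2 * (v τ x * pdt v τ x))
        (fun x => -2 * (ξ τ x * (v τ x * pdx v τ x))
          + (-2) * (v τ x * pdx (pdx (pdx v)) τ x)) (uIcc (0:ℝ) L) := by
      intro x hx
      rw [Set.uIcc_of_le hL.le] at hx
      simp only
      rw [hPDE' τ hτ x hx]
      ring
    have i1 : IntervalIntegrable (fun x => -2 * (ξ τ x * (v τ x * pdx v τ x))) volume 0 L := by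
      apply Continuous.intervalIntegrable
      exact continuous_const.mul ((contDiff_curry_right hξ τ).continuous.mul
        (((contDiff_curry_right hv τ).continuous).mul
          (contDiff_curry_right (contDiff_pdx hv) τ).continuous))
    have i2 : IntervalIntegrable (fun x => (-2) * (v τ x * pdx (pdx (pdx v)) τ x)) volume 0 L := by
      apply Continuous.intervalIntegrable
      exact continuous_const.mul ((contDiff_curry_right hv τ).continuous.mul
        (contDiff_curry_right (contDiff_pdx (contDiff_pdx (contDiff_pdx hv))) τ).continuous)
    rw [intervalIntegral.integral_congr hcongr, intervalIntegral.integral_add i1 i2,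
      intervalIntegral.integral_const_mul, intervalIntegral.integral_const_mul,
      ftc_x1 hv b0 bL bx0]
    ring
  have outercongr : EqOn (fun τ => ∫ x in (0:ℝ)..L, 2 * (v τ x * pdt v τ x))
      (fun τ => -2*(∫ x in (0:ℝ)..L, ξ τ x * (v τ x * pdx v τ x)) + (pdx v τ L)^2)
      (uIcc s T) := by
    intro τ hτ
    rw [Set.uIcc_of_le hs.2] at hτ
    exact inner τ (Icc_subset_Icc hs.1 le_rfl hτ)
  have Qc : Continuous (fun τ => ∫ x in (0:ℝ)..L, ξ τ x * (v τ x * pdx v τ x)) := by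
    apply intervalIntegral.continuous_parametric_intervalIntegral_of_continuous'
      (f := fun τ x => ξ τ x * (v τ x * pdx v τ x))
    exact cξ.mul (cv.mul cvx)
  have Jc : Continuous (fun τ => (pdx v τ L)^2) :=
    (cvx.comp (continuous_id.prodMk continuous_const)).pow 2
  rw [h3, intervalIntegral.integral_congr outercongr,
    intervalIntegral.integral_add ((continuous_const.fun_mul Qc).intervalIntegrable s T)
      (Jc.intervalIntegrable s T)]
  congr 1
  exact intervalIntegral.integral_const_mul _ _

lemma F_id {T L : ℝ} (hT : 0 < T) (hL : 0 < L) {ξ v : ℝ → ℝ → ℝ}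
    (hξ : ContDiff ℝ (⊤:ℕ∞) (uncurry ξ)) (hv : ContDiff ℝ (⊤:ℕ∞) (uncurry v))
    (hPDE : ∀ t ∈ Set.Ioo (0:ℝ) T, ∀ x ∈ Set.Ioo (0:ℝ) L,
      -pdt v t x - ξ t x * pdx v t x - pdx (pdx (pdx v)) t x = 0)
    (hbc : ∀ t ∈ Set.Icc (0:ℝ) T, v t 0 = 0 ∧ v t L = 0 ∧ pdx v t 0 = 0) :
    (∫ x in (0:ℝ)..L, x * (v T x)^2) - (∫ x in (0:ℝ)..L, x * (v 0 x)^2)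
      = -2*(∫ τ in (0:ℝ)..T, ∫ x in (0:ℝ)..L, x * (ξ τ x * (v τ x * pdx v τ x)))
        + L*(∫ τ in (0:ℝ)..T, (pdx v τ L)^2)
        - 3*(∫ τ in (0:ℝ)..T, ∫ x in (0:ℝ)..L, (pdx v τ x)^2) := by
  have hPDE' := pde_closed hT hL hξ hv hPDE
  have h3 := ftc_t (T := T) hL hv (fun y : ℝ => y) continuous_id hT.le
  have cξ : Continuous (fun p : ℝ×ℝ => ξ p.1 p.2) := hξ.continuous
  have cv : Continuous (fun p : ℝ×ℝ => v p.1 p.2) := hv.continuous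
  have cvx : Continuous (fun p : ℝ×ℝ => pdx v p.1 p.2) := (contDiff_pdx hv).continuous
  have inner : ∀ τ ∈ Icc (0:ℝ) T,
      (∫ x in (0:ℝ)..L, 2 * x * (v τ x * pdt v τ x))
      = -2*(∫ x in (0:ℝ)..L, x * (ξ τ x * (v τ x * pdx v τ x))) + L*(pdx v τ L)^2
        - 3*(∫ x in (0:ℝ)..L, (pdx v τ x)^2) := by
    intro τ hτ
    obtain ⟨b0, bL, bx0⟩ := hbc τ hτ
    have hcongr : EqOn (fun x => 2 * x * (v τ x * pdt v τ x))
        (fun x => -2 * (x * (ξ τ x * (v τ x * pdx v τ x)))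
          + (-2) * (x * (v τ x * pdx (pdx (pdx v)) τ x) - (3/2)*(pdx v τ x)^2)
          + (-3) * (pdx v τ x)^2) (uIcc (0:ℝ) L) := by
      intro x hx
      rw [Set.uIcc_of_le hL.le] at hx
      simp only
      rw [hPDE' τ hτ x hx]
      ring
    have c1 : Continuous (fun x => -2 * (x * (ξ τ x * (v τ x * pdx v τ x)))) :=
      continuous_const.mul (continuous_id.mul ((contDiff_curry_right hξ τ).continuous.mul
        ((contDiff_curry_right hv τ).continuous.mul
          (contDiff_curry_right (contDiff_pdx hv) τ).continuous)))
    have c2 : Continuous (fun x => (-2) * (x * (v τ x * pdx (pdx (pdx v)) τ x)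
        - (3/2)*(pdx v τ x)^2)) := by
      apply continuous_const.mul
      apply Continuous.sub
      · exact continuous_id.mul ((contDiff_curry_right hv τ).continuous.mul
          (contDiff_curry_right (contDiff_pdx (contDiff_pdx (contDiff_pdx hv))) τ).continuous)
      · exact continuous_const.mul ((contDiff_curry_right (contDiff_pdx hv) τ).continuous.pow 2)
    have c3 : Continuous (fun x => (-3) * (pdx v τ x)^2) :=
      continuous_const.mul ((contDiff_curry_right (contDiff_pdx hv) τ).continuous.pow 2)
    rw [intervalIntegral.integral_congr hcongr,
      intervalIntegral.integral_add ((c1.intervalIntegrable 0 L).add (c2.intervalIntegrable 0 L))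
        (c3.intervalIntegrable 0 L),
      intervalIntegral.integral_add (c1.intervalIntegrable 0 L) (c2.intervalIntegrable 0 L),
      intervalIntegral.integral_const_mul, intervalIntegral.integral_const_mul,
      intervalIntegral.integral_const_mul, ftc_x2 hv b0 bL]
    ring
  have outercongr : EqOn (fun τ => ∫ x in (0:ℝ)..L, 2 * x * (v τ x * pdt v τ x))
      (fun τ => -2*(∫ x in (0:ℝ)..L, x * (ξ τ x * (v τ x * pdx v τ x))) + L*(pdx v τ L)^2
        + (-3) * (∫ x in (0:ℝ)..L, (pdx v τ x)^2)) (uIcc (0:ℝ) T) := by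
    intro τ hτ
    rw [Set.uIcc_of_le hT.le] at hτ
    have := inner τ hτ
    simp only
    linarith [this]
  have Qxc : Continuous (fun τ => ∫ x in (0:ℝ)..L, x * (ξ τ x * (v τ x * pdx v τ x))) := by
    apply intervalIntegral.continuous_parametric_intervalIntegral_of_continuous'
      (f := fun τ x => x * (ξ τ x * (v τ x * pdx v τ x)))
    exact continuous_snd.mul (cξ.mul (cv.mul cvx))
  have Gc : Continuous (fun τ => ∫ x in (0:ℝ)..L, (pdx v τ x)^2) := by
    apply intervalIntegral.continuous_parametric_intervalIntegral_of_continuous'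
      (f := fun τ x => (pdx v τ x)^2)
    exact cvx.pow 2
  have Jc : Continuous (fun τ => L*(pdx v τ L)^2) :=
    continuous_const.mul ((cvx.comp (continuous_id.prodMk continuous_const)).pow 2)
  rw [h3, intervalIntegral.integral_congr outercongr,
    intervalIntegral.integral_add (((continuous_const.fun_mul Qxc).fun_add Jc).intervalIntegrable 0 T)
      ((continuous_const.fun_mul Gc).intervalIntegrable 0 T),
    intervalIntegral.integral_add ((continuous_const.fun_mul Qxc).intervalIntegrable 0 T)
      (Jc.intervalIntegrable 0 T),
    intervalIntegral.integral_const_mul, intervalIntegral.integral_const_mul,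
    intervalIntegral.integral_const_mul]
  ring


set_option maxHeartbeats 1000000 in
/-- energy estimate for the adjoint system with small potential.
There is `C = C(L) > 0` such that for every `T > 0`, every potential `ξ` with
`‖ξ‖_{L²(0,T;H¹(0,L))} ≤ 1/√C` and every solution `v` of the adjoint system,
`max_{t∈[0,T]} ∫ v(t)² dx + ∫∫ v_x² ≤ C ∫ v(T)² dx`
(the max over `t` is expressed as a bound for every `t ∈ [0,T]`). -/
theorem stmt_6 (L : ℝ) (hL : 0 < L) :
    ∃ C : ℝ, 0 < C ∧
      ∀ T : ℝ, 0 < T →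
        ∀ ξ : ℝ → ℝ → ℝ, ContDiff ℝ (⊤ : ℕ∞) (Function.uncurry ξ) →
          Real.sqrt (∫ t in (0:ℝ)..T, ∫ x in (0:ℝ)..L,
              ((ξ t x) ^ 2 + (pdx ξ t x) ^ 2)) ≤ 1 / Real.sqrt C →
          ∀ v : ℝ → ℝ → ℝ, ContDiff ℝ (⊤ : ℕ∞) (Function.uncurry v) →
            (∀ t ∈ Set.Ioo (0:ℝ) T, ∀ x ∈ Set.Ioo (0:ℝ) L,
              -pdt v t x - ξ t x * pdx v t x - pdx (pdx (pdx v)) t x = 0) →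
            (∀ t ∈ Set.Icc (0:ℝ) T, v t 0 = 0 ∧ v t L = 0 ∧ pdx v t 0 = 0) →
            ∀ t ∈ Set.Icc (0:ℝ) T,
              (∫ x in (0:ℝ)..L, (v t x) ^ 2)
                + (∫ τ in (0:ℝ)..T, ∫ x in (0:ℝ)..L, (pdx v τ x) ^ 2) ≤
              C * ∫ x in (0:ℝ)..L, (v T x) ^ 2 := by
  have hLinv : (0:ℝ) < 1/L := one_div_pos.mpr hL
  have hc₀ : (0:ℝ) < 1 + 1/L := by linarith
  have h1L : (0:ℝ) < 1 + L := by linarith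
  refine ⟨4*(1+L)^2*(1+1/L) + 2 + 2*L, by nlinarith [sq_nonneg (1+L)], ?_⟩
  intro T hT ξ hξ hξnorm v hv hPDE hbc t ht
  set C := 4*(1+L)^2*(1+1/L) + 2 + 2*L with hCdef
  have hCpos : 0 < C := by rw [hCdef]; nlinarith [sq_nonneg (1+L)]
  have hvx := contDiff_pdx hv
  have hξx := contDiff_pdx hξ
  have cv : Continuous (fun p : ℝ×ℝ => v p.1 p.2) := hv.continuous
  have cvx : Continuous (fun p : ℝ×ℝ => pdx v p.1 p.2) := hvx.continuous
  have cξ : Continuous (fun p : ℝ×ℝ => ξ p.1 p.2) := hξ.continuous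
  have cξx : Continuous (fun p : ℝ×ℝ => pdx ξ p.1 p.2) := hξx.continuous
  set D := ∫ x in (0:ℝ)..L, (v T x)^2 with hD
  set A := ∫ τ in (0:ℝ)..T, ∫ x in (0:ℝ)..L, (pdx v τ x)^2 with hA
  set N := ∫ τ in (0:ℝ)..T, ∫ x in (0:ℝ)..L, ((ξ τ x)^2 + (pdx ξ τ x)^2) with hN
  set B := ∫ τ in (0:ℝ)..T, ∫ x in (0:ℝ)..L, |ξ τ x * (v τ x * pdx v τ x)| with hB
  have Ec : Continuous (fun s : ℝ => ∫ x in (0:ℝ)..L, (v s x)^2) := by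
    apply intervalIntegral.continuous_parametric_intervalIntegral_of_continuous'
      (f := fun s x => (v s x)^2)
    exact cv.pow 2
  have Gc : Continuous (fun τ : ℝ => ∫ x in (0:ℝ)..L, (pdx v τ x)^2) := by
    apply intervalIntegral.continuous_parametric_intervalIntegral_of_continuous'
      (f := fun τ x => (pdx v τ x)^2)
    exact cvx.pow 2
  have Hc : Continuous (fun τ : ℝ => ∫ x in (0:ℝ)..L, ((ξ τ x)^2 + (pdx ξ τ x)^2)) := by
    apply intervalIntegral.continuous_parametric_intervalIntegral_of_continuous'
      (f := fun τ x => ((ξ τ x)^2 + (pdx ξ τ x)^2))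
    exact (cξ.pow 2).add (cξx.pow 2)
  have Pc : Continuous (fun τ : ℝ => ∫ x in (0:ℝ)..L, |ξ τ x * (v τ x * pdx v τ x)|) := by
    apply intervalIntegral.continuous_parametric_intervalIntegral_of_continuous'
      (f := fun τ x => |ξ τ x * (v τ x * pdx v τ x)|)
    exact (cξ.mul (cv.mul cvx)).abs
  have Qc : Continuous (fun τ : ℝ => ∫ x in (0:ℝ)..L, ξ τ x * (v τ x * pdx v τ x)) := by
    apply intervalIntegral.continuous_parametric_intervalIntegral_of_continuous'
      (f := fun τ x => ξ τ x * (v τ x * pdx v τ x))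
    exact cξ.mul (cv.mul cvx)
  have Qxc : Continuous (fun τ : ℝ => ∫ x in (0:ℝ)..L, x * (ξ τ x * (v τ x * pdx v τ x))) := by
    apply intervalIntegral.continuous_parametric_intervalIntegral_of_continuous'
      (f := fun τ x => x * (ξ τ x * (v τ x * pdx v τ x)))
    exact continuous_snd.mul (cξ.mul (cv.mul cvx))
  have hEnn : ∀ s : ℝ, 0 ≤ ∫ x in (0:ℝ)..L, (v s x)^2 :=
    fun s => intervalIntegral.integral_nonneg hL.le (fun x _ => sq_nonneg _)
  have hGnn : ∀ τ : ℝ, 0 ≤ ∫ x in (0:ℝ)..L, (pdx v τ x)^2 :=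
    fun τ => intervalIntegral.integral_nonneg hL.le (fun x _ => sq_nonneg _)
  have hHnn : ∀ τ : ℝ, 0 ≤ ∫ x in (0:ℝ)..L, ((ξ τ x)^2 + (pdx ξ τ x)^2) :=
    fun τ => intervalIntegral.integral_nonneg hL.le
      (fun x _ => add_nonneg (sq_nonneg _) (sq_nonneg _))
  have hPnn : ∀ τ : ℝ, 0 ≤ ∫ x in (0:ℝ)..L, |ξ τ x * (v τ x * pdx v τ x)| :=
    fun τ => intervalIntegral.integral_nonneg hL.le (fun x _ => abs_nonneg _)
  have hD0 : 0 ≤ D := hEnn T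
  have hA0 : 0 ≤ A := by
    rw [hA]; exact intervalIntegral.integral_nonneg hT.le (fun τ _ => hGnn τ)
  have hN0 : 0 ≤ N := by
    rw [hN]; exact intervalIntegral.integral_nonneg hT.le (fun τ _ => hHnn τ)
  have hB0 : 0 ≤ B := by
    rw [hB]; exact intervalIntegral.integral_nonneg hT.le (fun τ _ => hPnn τ)
  obtain ⟨ts, hts, hmax⟩ := isCompact_Icc.exists_isMaxOn (Set.nonempty_Icc.mpr hT.le)
    Ec.continuousOn
  set M := ∫ x in (0:ℝ)..L, (v ts x)^2 with hMdef
  have hM : ∀ s ∈ Icc (0:ℝ) T, (∫ x in (0:ℝ)..L, (v s x)^2) ≤ M := fun s hs => hmax hs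
  have hM0 : 0 ≤ M := hEnn ts
  clear_value C D A N B M
  have hQwin : ∀ s ∈ Icc (0:ℝ) T,
      |∫ τ in s..T, ∫ x in (0:ℝ)..L, ξ τ x * (v τ x * pdx v τ x)| ≤ B := by
    intro s hs
    have h1 : |∫ τ in s..T, ∫ x in (0:ℝ)..L, ξ τ x * (v τ x * pdx v τ x)|
        ≤ ∫ τ in s..T, |∫ x in (0:ℝ)..L, ξ τ x * (v τ x * pdx v τ x)| :=
      intervalIntegral.abs_integral_le_integral_abs hs.2
    have h2 : (∫ τ in s..T, |∫ x in (0:ℝ)..L, ξ τ x * (v τ x * pdx v τ x)|)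
        ≤ ∫ τ in s..T, ∫ x in (0:ℝ)..L, |ξ τ x * (v τ x * pdx v τ x)| := by
      apply intervalIntegral.integral_mono_on hs.2 (Qc.abs.intervalIntegrable s T)
        (Pc.intervalIntegrable s T)
      intro τ _
      exact intervalIntegral.abs_integral_le_integral_abs hL.le
    have h3 : (∫ τ in s..T, ∫ x in (0:ℝ)..L, |ξ τ x * (v τ x * pdx v τ x)|) ≤ B := by
      rw [hB]
      apply intervalIntegral.integral_mono_interval hs.1 hs.2 le_rfl
      · exact MeasureTheory.ae_of_all _ (fun τ => hPnn τ)
      · exact Pc.intervalIntegrable 0 T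
    linarith
  have hQxwin : |∫ τ in (0:ℝ)..T, ∫ x in (0:ℝ)..L, x * (ξ τ x * (v τ x * pdx v τ x))|
      ≤ L * B := by
    have h1 : |∫ τ in (0:ℝ)..T, ∫ x in (0:ℝ)..L, x * (ξ τ x * (v τ x * pdx v τ x))|
        ≤ ∫ τ in (0:ℝ)..T, |∫ x in (0:ℝ)..L, x * (ξ τ x * (v τ x * pdx v τ x))| :=
      intervalIntegral.abs_integral_le_integral_abs hT.le
    have h2 : ∀ τ : ℝ, |∫ x in (0:ℝ)..L, x * (ξ τ x * (v τ x * pdx v τ x))|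
        ≤ L * ∫ x in (0:ℝ)..L, |ξ τ x * (v τ x * pdx v τ x)| := by
      intro τ
      have ha : |∫ x in (0:ℝ)..L, x * (ξ τ x * (v τ x * pdx v τ x))|
          ≤ ∫ x in (0:ℝ)..L, |x * (ξ τ x * (v τ x * pdx v τ x))| :=
        intervalIntegral.abs_integral_le_integral_abs hL.le
      have hb : (∫ x in (0:ℝ)..L, |x * (ξ τ x * (v τ x * pdx v τ x))|)
          ≤ ∫ x in (0:ℝ)..L, L * |ξ τ x * (v τ x * pdx v τ x)| := by
        apply intervalIntegral.integral_mono_on hL.le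
        · exact ((continuous_id.mul ((contDiff_curry_right hξ τ).continuous.mul
            ((contDiff_curry_right hv τ).continuous.mul
              (contDiff_curry_right hvx τ).continuous))).abs).intervalIntegrable 0 L
        · exact (continuous_const.mul ((contDiff_curry_right hξ τ).continuous.mul
            ((contDiff_curry_right hv τ).continuous.mul
              (contDiff_curry_right hvx τ).continuous)).abs).intervalIntegrable 0 L
        · intro x hx
          rw [abs_mul]
          apply mul_le_mul_of_nonneg_right _ (abs_nonneg _)
          rw [abs_of_nonneg hx.1]
          exact hx.2
      rw [intervalIntegral.integral_const_mul] at hb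
      linarith
    have h3 : (∫ τ in (0:ℝ)..T, |∫ x in (0:ℝ)..L, x * (ξ τ x * (v τ x * pdx v τ x))|)
        ≤ ∫ τ in (0:ℝ)..T, L * ∫ x in (0:ℝ)..L, |ξ τ x * (v τ x * pdx v τ x)| := by
      apply intervalIntegral.integral_mono_on hT.le (Qxc.abs.intervalIntegrable 0 T)
        ((continuous_const.mul Pc).intervalIntegrable 0 T)
      intro τ _
      exact h2 τ
    rw [intervalIntegral.integral_const_mul, ← hB] at h3
    linarith
  have hEb : ∀ s ∈ Icc (0:ℝ) T, (∫ x in (0:ℝ)..L, (v s x)^2) ≤ D + 2*B := by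
    intro s hs
    have hid := E_id hT hL hξ hv hPDE hbc hs
    have hQ := hQwin s hs
    have hJ : 0 ≤ ∫ τ in s..T, (pdx v τ L)^2 :=
      intervalIntegral.integral_nonneg hs.2 (fun τ _ => sq_nonneg _)
    rw [← hD] at hid
    have habs := abs_le.mp hQ
    linarith [habs.1, habs.2]
  have hMb : M ≤ D + 2*B := by
    have h := hEb ts hts
    rw [← hMdef] at h
    exact h
  have hJtot : (∫ τ in (0:ℝ)..T, (pdx v τ L)^2) ≤ D + 2*B := by
    have hid := E_id hT hL hξ hv hPDE hbc (⟨le_rfl, hT.le⟩ : (0:ℝ) ∈ Icc (0:ℝ) T)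
    have hQ := hQwin 0 ⟨le_rfl, hT.le⟩
    have hE0 := hEnn 0
    rw [← hD] at hid
    have habs := abs_le.mp hQ
    linarith [habs.1, habs.2]
  have hF : 3*A ≤ L*M + L*(D + 2*B) + 2*(L*B) := by
    have hid := F_id hT hL hξ hv hPDE hbc
    rw [← hA] at hid
    have hFT : 0 ≤ ∫ x in (0:ℝ)..L, x * (v T x)^2 :=
      intervalIntegral.integral_nonneg hL.le (fun x hx => mul_nonneg hx.1 (sq_nonneg _))
    have hF0 : (∫ x in (0:ℝ)..L, x * (v 0 x)^2) ≤ L * M := by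
      have step : (∫ x in (0:ℝ)..L, x * (v 0 x)^2) ≤ ∫ x in (0:ℝ)..L, L * (v 0 x)^2 := by
        apply intervalIntegral.integral_mono_on hL.le
        · exact (continuous_id.mul (((contDiff_curry_right hv 0).continuous).pow 2)).intervalIntegrable 0 L
        · exact (continuous_const.mul (((contDiff_curry_right hv 0).continuous).pow 2)).intervalIntegrable 0 L
        · intro x hx
          exact mul_le_mul_of_nonneg_right hx.2 (sq_nonneg _)
      rw [intervalIntegral.integral_const_mul] at step
      have h0 := hM 0 ⟨le_rfl, hT.le⟩
      have := mul_le_mul_of_nonneg_left h0 hL.le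
      linarith
    have habsx := abs_le.mp hQxwin
    have hLJ := mul_le_mul_of_nonneg_left hJtot hL.le
    linarith [hid, hFT, hF0, habsx.1, habsx.2, hLJ]
  have hsob : ∀ τ : ℝ, ∀ x ∈ Icc (0:ℝ) L,
      (ξ τ x)^2 ≤ (1+1/L) * ∫ y in (0:ℝ)..L, ((ξ τ y)^2 + (pdx ξ τ y)^2) :=
    fun τ => sobolev_sup hL (contDiff_curry_right hξ τ).continuous
      (contDiff_curry_right hξx τ).continuous (hasDerivAt_pdx hξ τ)
  have hPpt : ∀ τ ∈ Icc (0:ℝ) T, (∫ x in (0:ℝ)..L, |ξ τ x * (v τ x * pdx v τ x)|)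
      ≤ Real.sqrt M * (Real.sqrt ((1+1/L) * ∫ y in (0:ℝ)..L, ((ξ τ y)^2 + (pdx ξ τ y)^2))
        * Real.sqrt (∫ x in (0:ℝ)..L, (pdx v τ x)^2)) := by
    intro τ hτ
    set S := Real.sqrt ((1+1/L) * ∫ y in (0:ℝ)..L, ((ξ τ y)^2 + (pdx ξ τ y)^2)) with hS
    have hS0 : 0 ≤ S := Real.sqrt_nonneg _
    have hxiS : ∀ x ∈ Icc (0:ℝ) L, |ξ τ x| ≤ S := by
      intro x hx
      rw [hS, ← Real.sqrt_sq_eq_abs]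
      exact Real.sqrt_le_sqrt (hsob τ x hx)
    have cq : Continuous (fun x => |v τ x * pdx v τ x|) :=
      (((contDiff_curry_right hv τ).continuous).mul
        ((contDiff_curry_right hvx τ).continuous)).abs
    have cabs : Continuous (fun x => |ξ τ x * (v τ x * pdx v τ x)|) :=
      ((contDiff_curry_right hξ τ).continuous.mul
        (((contDiff_curry_right hv τ).continuous).mul
          (contDiff_curry_right hvx τ).continuous)).abs
    have stepa : (∫ x in (0:ℝ)..L, |ξ τ x * (v τ x * pdx v τ x)|)
        ≤ ∫ x in (0:ℝ)..L, S * |v τ x * pdx v τ x| := by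
      apply intervalIntegral.integral_mono_on hL.le (cabs.intervalIntegrable 0 L)
        ((continuous_const.mul cq).intervalIntegrable 0 L)
      intro x hx
      rw [abs_mul]
      exact mul_le_mul_of_nonneg_right (hxiS x hx) (abs_nonneg _)
    rw [intervalIntegral.integral_const_mul] at stepa
    have stepc : (∫ x in (0:ℝ)..L, |v τ x * pdx v τ x|)
        ≤ Real.sqrt (∫ x in (0:ℝ)..L, (v τ x)^2)
          * Real.sqrt (∫ x in (0:ℝ)..L, (pdx v τ x)^2) := by
      have hcs := cs_interval hL.le (f := fun x => |v τ x|) (g := fun x => |pdx v τ x|)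
        ((contDiff_curry_right hv τ).continuous.abs)
        ((contDiff_curry_right hvx τ).continuous.abs)
      have e1 : (∫ x in (0:ℝ)..L, |v τ x| * |pdx v τ x|)
          = ∫ x in (0:ℝ)..L, |v τ x * pdx v τ x| := by
        apply intervalIntegral.integral_congr
        intro x _
        simp [abs_mul]
      have e2 : (∫ x in (0:ℝ)..L, |v τ x|^2) = ∫ x in (0:ℝ)..L, (v τ x)^2 := by
        apply intervalIntegral.integral_congr
        intro x _
        simp [sq_abs]
      have e3 : (∫ x in (0:ℝ)..L, |pdx v τ x|^2) = ∫ x in (0:ℝ)..L, (pdx v τ x)^2 := by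
        apply intervalIntegral.integral_congr
        intro x _
        simp [sq_abs]
      rw [e1, e2, e3] at hcs
      exact hcs
    have hEM : Real.sqrt (∫ x in (0:ℝ)..L, (v τ x)^2) ≤ Real.sqrt M :=
      Real.sqrt_le_sqrt (hM τ hτ)
    have hGnn' : 0 ≤ Real.sqrt (∫ x in (0:ℝ)..L, (pdx v τ x)^2) := Real.sqrt_nonneg _
    calc (∫ x in (0:ℝ)..L, |ξ τ x * (v τ x * pdx v τ x)|)
        ≤ S * ∫ x in (0:ℝ)..L, |v τ x * pdx v τ x| := stepa
      _ ≤ S * (Real.sqrt (∫ x in (0:ℝ)..L, (v τ x)^2)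
          * Real.sqrt (∫ x in (0:ℝ)..L, (pdx v τ x)^2)) :=
          mul_le_mul_of_nonneg_left stepc hS0
      _ = (S * Real.sqrt (∫ x in (0:ℝ)..L, (pdx v τ x)^2))
          * Real.sqrt (∫ x in (0:ℝ)..L, (v τ x)^2) := by ring
      _ ≤ (S * Real.sqrt (∫ x in (0:ℝ)..L, (pdx v τ x)^2)) * Real.sqrt M :=
          mul_le_mul_of_nonneg_left hEM (mul_nonneg hS0 hGnn')
      _ = Real.sqrt M * (S * Real.sqrt (∫ x in (0:ℝ)..L, (pdx v τ x)^2)) := by ring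
  have Sc : Continuous (fun τ : ℝ =>
      Real.sqrt ((1+1/L) * ∫ y in (0:ℝ)..L, ((ξ τ y)^2 + (pdx ξ τ y)^2))) :=
    Real.continuous_sqrt.comp (continuous_const.mul Hc)
  have sGc : Continuous (fun τ : ℝ => Real.sqrt (∫ x in (0:ℝ)..L, (pdx v τ x)^2)) :=
    Real.continuous_sqrt.comp Gc
  have hBb : B ≤ Real.sqrt M * (Real.sqrt ((1+1/L)*N) * Real.sqrt A) := by
    have step1 : B ≤ ∫ τ in (0:ℝ)..T, Real.sqrt M
        * (Real.sqrt ((1+1/L) * ∫ y in (0:ℝ)..L, ((ξ τ y)^2 + (pdx ξ τ y)^2))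
          * Real.sqrt (∫ x in (0:ℝ)..L, (pdx v τ x)^2)) := by
      rw [hB]
      apply intervalIntegral.integral_mono_on hT.le (Pc.intervalIntegrable 0 T)
        ((continuous_const.mul (Sc.mul sGc)).intervalIntegrable 0 T)
      intro τ hτ
      exact hPpt τ hτ
    rw [intervalIntegral.integral_const_mul] at step1
    have step2 := cs_interval hT.le Sc sGc
    have e1 : (∫ τ in (0:ℝ)..T,
        (Real.sqrt ((1+1/L) * ∫ y in (0:ℝ)..L, ((ξ τ y)^2 + (pdx ξ τ y)^2)))^2)
        = (1+1/L)*N := by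
      have ec : (∫ τ in (0:ℝ)..T,
          (Real.sqrt ((1+1/L) * ∫ y in (0:ℝ)..L, ((ξ τ y)^2 + (pdx ξ τ y)^2)))^2)
          = ∫ τ in (0:ℝ)..T, (1+1/L) * ∫ y in (0:ℝ)..L, ((ξ τ y)^2 + (pdx ξ τ y)^2) := by
        apply intervalIntegral.integral_congr
        intro τ _
        exact Real.sq_sqrt (mul_nonneg hc₀.le (hHnn τ))
      rw [ec, intervalIntegral.integral_const_mul, ← hN]
    have e2 : (∫ τ in (0:ℝ)..T, (Real.sqrt (∫ x in (0:ℝ)..L, (pdx v τ x)^2))^2) = A := by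
      have ec : (∫ τ in (0:ℝ)..T, (Real.sqrt (∫ x in (0:ℝ)..L, (pdx v τ x)^2))^2)
          = ∫ τ in (0:ℝ)..T, ∫ x in (0:ℝ)..L, (pdx v τ x)^2 := by
        apply intervalIntegral.integral_congr
        intro τ _
        exact Real.sq_sqrt (hGnn τ)
      rw [ec, ← hA]
    rw [e1, e2] at step2
    have step3 := mul_le_mul_of_nonneg_left step2 (Real.sqrt_nonneg M)
    linarith [step1, step3]
  have hsqC : 2*(1+L)*Real.sqrt (1+1/L) ≤ Real.sqrt C := by
    have hsq := Real.sq_sqrt hc₀.le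
    have h1 : (2*(1+L)*Real.sqrt (1+1/L))^2 = 4*(1+L)^2*(1+1/L) := by nlinarith [hsq]
    have h2 : (2*(1+L)*Real.sqrt (1+1/L))^2 ≤ C := by rw [h1, hCdef]; linarith
    have h3 : 0 ≤ 2*(1+L)*Real.sqrt (1+1/L) := by positivity
    calc 2*(1+L)*Real.sqrt (1+1/L) = Real.sqrt ((2*(1+L)*Real.sqrt (1+1/L))^2) :=
        (Real.sqrt_sq h3).symm
      _ ≤ Real.sqrt C := Real.sqrt_le_sqrt h2
  have hNle : Real.sqrt ((1+1/L)*N) ≤ 1/(2*(1+L)) := by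
    rw [Real.sqrt_mul hc₀.le]
    have hsc : 0 < Real.sqrt C := Real.sqrt_pos.mpr hCpos
    have hsc0 : 0 < Real.sqrt (1+1/L) := Real.sqrt_pos.mpr hc₀
    have h2 : Real.sqrt (1+1/L) * Real.sqrt N ≤ Real.sqrt (1+1/L) * (1/Real.sqrt C) :=
      mul_le_mul_of_nonneg_left hξnorm hsc0.le
    have h3 : Real.sqrt (1+1/L) * (1/Real.sqrt C) ≤ 1/(2*(1+L)) := by
      rw [mul_one_div, div_le_div_iff₀ hsc (by positivity)]
      linarith [hsqC]
    linarith
  have hsqMA : Real.sqrt M * Real.sqrt A ≤ (M+A)/2 := by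
    nlinarith [sq_nonneg (Real.sqrt M - Real.sqrt A), Real.sq_sqrt hM0, Real.sq_sqrt hA0]
  have hB4 : 4*(1+L)*B ≤ M + A := by
    have h1 : B ≤ (Real.sqrt M * Real.sqrt A) * Real.sqrt ((1+1/L)*N) := by
      calc B ≤ Real.sqrt M * (Real.sqrt ((1+1/L)*N) * Real.sqrt A) := hBb
        _ = (Real.sqrt M * Real.sqrt A) * Real.sqrt ((1+1/L)*N) := by ring
    have h2 : (Real.sqrt M * Real.sqrt A) * Real.sqrt ((1+1/L)*N)
        ≤ ((M+A)/2)*(1/(2*(1+L))) :=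
      mul_le_mul hsqMA hNle (Real.sqrt_nonneg _) (by linarith [hM0, hA0])
    have h4 := mul_le_mul_of_nonneg_right (h1.trans h2)
      (show (0:ℝ) ≤ 2*(1+L) by linarith)
    have e : ((M+A)/2)*(1/(2*(1+L)))*(2*(1+L)) = (M+A)/2 := by field_simp
    rw [e] at h4
    linarith
  have hLM : L * M ≤ L*(D+2*B) := mul_le_mul_of_nonneg_left hMb hL.le
  have hgoal1 : 3*(M + A) ≤ (3+2*L)*D + (6+6*L)*B := by linarith [hMb, hF, hLM]
  have hgoal2 : (6+6*L)*B ≤ (3/2)*(M+A) := by linarith [hB4]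
  have hMA : M + A ≤ (2 + 4*L/3)*D := by linarith
  have hfin : (∫ x in (0:ℝ)..L, (v t x)^2) ≤ M := hM t ht
  have hCd : (2+4*L/3)*D ≤ C*D := by
    have hcc : 2+4*L/3 ≤ C := by
      rw [hCdef]
      nlinarith [mul_nonneg (mul_nonneg (by norm_num : (0:ℝ) ≤ 4) (sq_nonneg (1+L))) hc₀.le]
    exact mul_le_mul_of_nonneg_right hcc hD0
  linarith

end Aux
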